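/- Let q be a prime power, k ≥ 0, and suppose e is a (q,k)-critical element of a (q,k)-overfull matroid M. Then either e lies on a line of M with at least q² + 2 points, or e lies on at least (q^{2k} - 1)/(q² - 1) + 1 lines of M each having at least q + 2 points. -/

import Mathlib

open Matroid Set

namespace GrowthRate

variable {α : Type*}

/-- The rank of a set in a matroid: the supremum of cardinalities of independent subsets. -/
noncomputable def eRk (M : Matroid α) (X : Set α) : ℕ∞ :=
  ⨆ I ∈ {I : Set α | M.Indep I ∧ I ⊆ X}, I.encard

/-- The rank of a matroid. -/
noncomputable def eRank (M : Matroid α) : ℕ∞ := eRk M M.E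

/-- Rank as a natural number (for finite matroids). -/
noncomputable def rk (M : Matroid α) (X : Set α) : ℕ := (eRk M X).toNat

/-- Rank of a matroid as a natural number. -/
noncomputable def rank (M : Matroid α) : ℕ := (eRank M).toNat

/-- Deletion of a set of elements. -/
noncomputable def delete (M : Matroid α) (D : Set α) : Matroid α := M ↾ (M.E \ D)

/-- Contraction of a set of elements, defined via duality. -/
noncomputable def contract (M : Matroid α) (C : Set α) : Matroid α := (delete M✶ C)✶

/-- `N` is a minor of `M` if it is obtained by a contraction followed by a deletion. -/
def IsMinor (N M : Matroid α) : Prop := ∃ C D : Set α, N = delete (contract M C) D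

/-- The number of points (rank-one flats) of `M` contained in `X`. -/
noncomputable def nPoints (M : Matroid α) (X : Set α) : ℕ :=
  {P : Set α | M.IsFlat P ∧ eRk M P = 1 ∧ P ⊆ X}.ncard

/-- `ε(M)`: the number of points (rank-one flats) of `M`. -/
noncomputable def eps (M : Matroid α) : ℕ := {P : Set α | M.IsFlat P ∧ eRk M P = 1}.ncard

/-- A matroid is simple if all singletons and pairs of ground elements are independent. -/
def Simple (M : Matroid α) : Prop :=
  ∀ e ∈ M.E, ∀ f ∈ M.E, M.Indep {e} ∧ (e ≠ f → M.Indep {e, f})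

/-- `M` has a `U_{2,m}`-minor: a minor that is simple of rank two with `m` elements. -/
def HasUnifLineMinor (M : Matroid α) (m : ℕ) : Prop :=
  ∃ N : Matroid α, IsMinor N M ∧ eRank N = 2 ∧ Simple N ∧ N.E.encard = m

/-- A matroid is weakly round if its ground set is not the union of a set of rank
at most `r(M)-2` and a set of rank at most `r(M)-1`. -/
def WeaklyRound (M : Matroid α) : Prop :=
  ¬ ∃ A B : Set α, A ∪ B = M.E ∧ eRk M A + 2 ≤ eRank M ∧ eRk M B + 1 ≤ eRank M

/-- `q` is a prime power. -/
def IsPrimePower (q : ℕ) : Prop := ∃ p n : ℕ, p.Prime ∧ 0 < n ∧ q = p ^ n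

/-- `M` is isomorphic to the projective geometry `PG(n-1, |F|)` over the finite field `F`:
there is a representation `f` of `M` by vectors in `F^n` such that distinct elements get
non-parallel vectors and every direction in `F^n` is represented. -/
def IsPG (M : Matroid α) (F : Type) [Field F] [Fintype F] (n : ℕ) : Prop :=
  ∃ f : α → (Fin n → F),
    (∀ I ⊆ M.E, (M.Indep I ↔ LinearIndependent F (fun x : I => f x))) ∧
    (∀ e ∈ M.E, ∀ e' ∈ M.E, ∀ c : F, f e' = c • f e → e = e') ∧
    (∀ v : Fin n → F, v ≠ 0 → ∃ e ∈ M.E, ∃ c : F, c ≠ 0 ∧ v = c • f e)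

/-- `M` is `(q,k)`-overfull. -/
noncomputable def Overfull (M : Matroid α) (q k : ℕ) : Prop :=
  ((q : ℚ) ^ (rank M + k) - 1) / ((q : ℚ) - 1)
      - (q : ℚ) * ((q : ℚ) ^ (2 * k) - 1) / ((q : ℚ) ^ 2 - 1) < (eps M : ℚ)


section Aux

variable {M : Matroid α} {I J X Y B F P L : Set α} {e f : α}

lemma le_eRk (hI : M.Indep I) (hIX : I ⊆ X) : I.encard ≤ eRk M X :=
  le_biSup _ (show I ∈ {I : Set α | M.Indep I ∧ I ⊆ X} from ⟨hI, hIX⟩)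

lemma eRk_le_iff {n : ℕ∞} : eRk M X ≤ n ↔ ∀ I, M.Indep I → I ⊆ X → I.encard ≤ n := by
  simp [eRk, iSup₂_le_iff, and_imp, Set.mem_setOf_eq]

lemma eRk_eq_of_basis' (hI : M.IsBasis' I X) : eRk M X = I.encard := by
  refine le_antisymm (eRk_le_iff.2 fun J hJ hJX => ?_) (le_eRk hI.indep hI.subset)
  by_contra hlt
  push_neg at hlt
  obtain ⟨x, hxJI, hxi⟩ := hI.indep.augment hJ hlt
  exact hI.insert_not_indep ⟨hJX hxJI.1, hxJI.2⟩ hxi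

lemma eRk_eq_of_basis (hI : M.IsBasis I X) : eRk M X = I.encard :=
  eRk_eq_of_basis' hI.isBasis'

lemma eRank_eq_of_base (hB : M.IsBase B) : eRank M = B.encard :=
  eRk_eq_of_basis hB.isBasis_ground

lemma closure_flat (M : Matroid α) (X : Set α) : M.IsFlat (M.closure X) :=
  ⟨fun I Y hI hIY => hIY.subset_closure.trans
    (by rw [hI.closure_eq_closure, Matroid.closure_closure]), M.closure_subset_ground X⟩


lemma flat_eq_of_subset (h1 : M.IsFlat F) (h2 : M.IsFlat Y) (hss : F ⊆ Y)
    (hrk : eRk M Y ≤ eRk M F) (hfin : eRk M F ≠ ⊤) : F = Y := by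
  obtain ⟨I, hI⟩ := M.exists_isBasis F h1.subset_ground
  have hFI : eRk M F = I.encard := eRk_eq_of_basis hI
  obtain ⟨J, hJ⟩ := M.exists_isBasis Y h2.subset_ground
  have hIY : M.IsBasis I Y := by
    by_contra hcon
    obtain ⟨x, hx, hxi⟩ := hI.indep.exists_insert_of_not_isBasis (hI.subset.trans hss) hcon hJ
    have hle := le_eRk hxi (insert_subset (hJ.subset hx.1) (hI.subset.trans hss))
    rw [encard_insert_of_notMem hx.2] at hle
    have : I.encard + 1 ≤ I.encard := hle.trans (hrk.trans_eq hFI)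
    rw [ENat.add_one_le_iff (by rw [← hFI]; exact hfin)] at this
    exact this.false
  refine hss.antisymm (hIY.subset_closure.trans ?_)
  rw [hI.closure_eq_closure, h1.closure]

lemma point_rep (hP : M.IsFlat P) (h1 : eRk M P = 1) : ∃ f, M.IsBasis {f} P ∧ P = M.closure {f} := by
  obtain ⟨I, hI⟩ := M.exists_isBasis P hP.subset_ground
  have hPI := eRk_eq_of_basis hI
  obtain ⟨f, rfl⟩ : ∃ f, I = {f} := by
    rw [← encard_eq_one, ← hPI, h1]
  exact ⟨f, hI, by rw [← hP.closure, ← hI.closure_eq_closure]⟩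

lemma closure_singleton_point (he : M.Indep {e}) :
    M.IsFlat (M.closure {e}) ∧ eRk M (M.closure {e}) = 1 :=
  ⟨closure_flat _ _, by rw [eRk_eq_of_basis he.isBasis_closure, encard_singleton]⟩

lemma closure_pair_line (h : M.Indep {e, f}) (hne : e ≠ f) :
    M.IsFlat (M.closure {e, f}) ∧ eRk M (M.closure {e, f}) = 2 ∧ e ∈ M.closure {e, f} :=
  ⟨closure_flat _ _, by rw [eRk_eq_of_basis h.isBasis_closure, encard_pair hne],
    M.mem_closure_of_mem (by simp) h.subset_ground⟩


lemma disjoint_insert_left' {s t : Set α} {a : α} :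
    Disjoint (insert a s) t ↔ a ∉ t ∧ Disjoint s t := by
  rw [Set.insert_eq, Set.disjoint_union_left, Set.disjoint_singleton_left]

lemma disjoint_insert_right' {s t : Set α} {a : α} :
    Disjoint s (insert a t) ↔ a ∉ s ∧ Disjoint s t := by
  rw [disjoint_comm, disjoint_insert_left', disjoint_comm]

lemma contract_ground (M : Matroid α) (e : α) : (contract M {e}).E = M.E \ {e} := rfl

lemma contract_indep_iff (he : M.Indep {e}) :
    (contract M {e}).Indep I ↔ e ∉ I ∧ M.Indep (insert e I) := by
  have heE : e ∈ M.E := singleton_subset_iff.1 he.subset_ground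
  obtain ⟨B1, hB1, heB1⟩ := he.exists_isBase_superset
  have hB0 : M✶.IsBase (M.E \ B1) ∧ e ∉ M.E \ B1 :=
    ⟨hB1.compl_isBase_dual, fun h => h.2 (heB1 rfl)⟩
  have hNbase : ∀ B : Set α, (delete M✶ {e}).IsBase B ↔ M✶.IsBase B ∧ e ∉ B := by
    intro B
    rw [delete, isBase_restrict_iff']
    constructor
    · intro h
      have hBE : B ⊆ M✶.E \ {e} := h.subset
      refine ⟨(h.isBasis_inter_ground.isBasis_subset hBE (by simp)).isBase_of_isBase_subset hB0.1
        (diff_subset_diff_right (by simpa using heB1)), fun heB => (hBE heB).2 rfl⟩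
    · rintro ⟨hB, heB⟩
      have hBss : B ⊆ M✶.E \ {e} := subset_diff_singleton hB.subset_ground heB
      exact ⟨⟨hB.indep, hBss⟩, fun J hJ hBJ => (hB.eq_of_subset_indep hJ.1 hBJ).symm.subset⟩
  constructor
  · rintro ⟨hIE, B, hB, hdj⟩
    rw [hNbase] at hB
    have hIE' : I ⊆ M.E \ {e} := hIE
    refine ⟨fun h => (hIE' h).2 rfl, ?_⟩
    rw [← dual_dual M]
    exact ⟨insert_subset heE (hIE'.trans diff_subset), B, hB.1,
      disjoint_insert_left'.2 ⟨hB.2, hdj⟩⟩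
  · rintro ⟨heI, hI⟩
    rw [← dual_dual M] at hI
    obtain ⟨hss, B, hB, hdj⟩ := hI
    rw [disjoint_insert_left'] at hdj
    refine ⟨subset_diff_singleton ((subset_insert e I).trans hss) heI, B, ?_, hdj.2⟩
    rw [hNbase]
    exact ⟨hB, hdj.1⟩

lemma contract_indep_iff_loop (heE : e ∈ M.E) (he : ¬ M.Indep {e}) :
    (contract M {e}).Indep I ↔ e ∉ I ∧ M.Indep I := by
  have hmem : ∀ B : Set α, M✶.IsBase B → e ∈ B := by
    intro B hB
    by_contra heB
    exact he ((hB.compl_isBase_of_dual.indep).subset (singleton_subset_iff.2 ⟨heE, heB⟩))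
  have hins : ∀ J : Set α, M✶.Indep J → M✶.Indep (insert e J) := by
    intro J hJ
    obtain ⟨B2, hB2, hJB2⟩ := hJ.exists_isBase_superset
    exact hB2.indep.subset (insert_subset (hmem _ hB2) hJB2)
  have hNbase : ∀ B : Set α, (delete M✶ {e}).IsBase B ↔ M✶.IsBase (insert e B) ∧ e ∉ B := by
    intro B
    rw [delete, isBase_restrict_iff']
    constructor
    · intro h
      have heB : e ∉ B := fun heB => (h.subset heB).2 rfl
      refine ⟨(hins _ h.indep).isBase_of_maximal fun J hJ hBJ => ?_, heB⟩
      have hJe : J \ {e} = B := by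
        refine (h.eq_of_subset_indep (hJ.subset diff_subset)
          (subset_diff_singleton ((subset_insert e B).trans hBJ) heB)
          (diff_subset_diff_left hJ.subset_ground)).symm
      rw [← hJe, insert_diff_singleton, insert_eq_of_mem (hBJ (mem_insert e B))]
    · rintro ⟨hB, heB⟩
      have hBi : M✶.Indep B := hB.indep.subset (subset_insert e B)
      refine ⟨⟨hBi, subset_diff_singleton (hBi.subset_ground) heB⟩, fun J hJ hBJ => ?_⟩
      have : insert e J = insert e B :=
        (hB.eq_of_subset_indep (hins _ hJ.1) (insert_subset_insert hBJ)).symm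
      intro x hxJ
      have hxe : x ≠ e := fun hx => (hJ.2 hxJ).2 hx
      have : x ∈ insert e B := this ▸ mem_insert_of_mem e hxJ
      exact this.resolve_left hxe
  constructor
  · rintro ⟨hIE, B, hB, hdj⟩
    rw [hNbase] at hB
    have hIE' : I ⊆ M.E \ {e} := hIE
    refine ⟨fun h => (hIE' h).2 rfl, ?_⟩
    rw [← dual_dual M]
    exact ⟨hIE'.trans diff_subset, insert e B, hB.1,
      disjoint_insert_right'.2 ⟨fun h => (hIE' h).2 rfl, hdj⟩⟩
  · rintro ⟨heI, hI⟩
    rw [← dual_dual M] at hI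
    obtain ⟨hss, B, hB, hdj⟩ := hI
    have heB : e ∈ B := hmem _ hB
    refine ⟨subset_diff_singleton hss heI, B \ {e}, ?_, hdj.mono_right diff_subset⟩
    rw [hNbase]
    rw [insert_diff_singleton, insert_eq_of_mem heB]
    exact ⟨hB, fun h => h.2 rfl⟩


lemma contract_base_of_nonloop (he : M.Indep {e}) (hB : M.IsBase B) (heB : e ∈ B) :
    (contract M {e}).IsBase (B \ {e}) := by
  have hI : (contract M {e}).Indep (B \ {e}) := by
    rw [contract_indep_iff he]
    refine ⟨fun h => h.2 rfl, ?_⟩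
    rw [insert_diff_singleton, insert_eq_of_mem heB]
    exact hB.indep
  refine hI.isBase_of_maximal fun J hJ hBJ => ?_
  rw [contract_indep_iff he] at hJ
  have : insert e J = B :=
    (hB.eq_of_subset_indep hJ.2 (by
      intro z hz
      rcases eq_or_ne z e with rfl | hne
      · exact mem_insert z J
      · exact mem_insert_of_mem e (hBJ ⟨hz, hne⟩))).symm
  rw [← this]
  simp [hJ.1]

lemma rank_contract_add_one [M.Finite] (he : M.Indep {e}) :
    rank M = rank (contract M {e}) + 1 := by
  obtain ⟨B, hB, heB⟩ := he.exists_isBase_superset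
  have heB' : e ∈ B := heB rfl
  have h1 : eRank M = B.encard := eRank_eq_of_base hB
  have h2 : eRank (contract M {e}) = (B \ {e}).encard :=
    eRank_eq_of_base (contract_base_of_nonloop he hB heB')
  have hfin : B.Finite := M.set_finite B hB.subset_ground
  rw [rank, rank, h1, h2, ← encard_diff_singleton_add_one heB']
  rw [ENat.toNat_add (by simpa using hfin.diff.encard_lt_top.ne) (by simp)]
  rfl

lemma contract_point_of_line (he : M.Indep {e}) (hL : M.IsFlat L) (hr : eRk M L = 2)
    (heL : e ∈ L) :
    (contract M {e}).IsFlat (L \ {e}) ∧ eRk (contract M {e}) (L \ {e}) = 1 := by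
  set M' := contract M {e} with hM'
  have hLE : L ⊆ M.E := hL.subset_ground
  have hgr : M'.E = M.E \ {e} := rfl
  obtain ⟨J, hJ, heJ⟩ := he.subset_isBasis_of_subset (singleton_subset_iff.2 heL) hLE
  have hJ2 : J.encard = 2 := by rw [← eRk_eq_of_basis hJ, hr]
  obtain ⟨x, y, hxy, rfl⟩ := encard_eq_two.1 hJ2
  obtain ⟨f, hfJ, hef⟩ : ∃ f, ({x, y} : Set α) = {e, f} ∧ e ≠ f := by
    rcases (heJ (show e ∈ ({e} : Set α) from rfl)) with (rfl | rfl)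
    · exact ⟨y, rfl, hxy⟩
    · exact ⟨x, pair_comm x e, hxy.symm⟩
  rw [hfJ] at hJ
  have hfL : f ∈ L := hJ.subset (by simp)
  have hIf : M'.Indep {f} := by
    rw [hM', contract_indep_iff he]
    exact ⟨by simpa using hef, hJ.indep⟩
  constructor
  · refine ⟨fun I X hI hIX => ?_, fun x hx => ⟨hLE hx.1, hx.2⟩⟩
    have hIi := (contract_indep_iff he).1 hI.indep
    have basis_trans : ∀ Y : Set α, Y ⊆ M'.E → M'.IsBasis I Y →
        M.IsBasis (insert e I) (insert e Y) := by
      intro Y hYE hIY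
      refine ((contract_indep_iff he).1 hIY.indep).2.isBasis_of_maximal_subset
        (insert_subset_insert hIY.subset) (fun K hK hIK hKY => ?_)
        (insert_subset (singleton_subset_iff.1 he.subset_ground)
          (hYE.trans diff_subset))
      have hK' : M'.Indep (K \ {e}) := by
        rw [contract_indep_iff he]
        refine ⟨fun h => h.2 rfl, ?_⟩
        rwa [insert_diff_singleton, insert_eq_of_mem (hIK (mem_insert e I))]
      have hKI : K \ {e} = I := by
        refine (hIY.eq_of_subset_indep hK' ?_ ?_).symm
        · exact subset_diff_singleton ((subset_insert e I).trans hIK)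
            (fun h => (hYE (hIY.subset h)).2 rfl)
        · intro z hz
          rcases hKY hz.1 with (rfl | hzY)
          · exact absurd rfl hz.2
          · exact hzY
      intro z hzK
      rcases eq_or_ne z e with rfl | hze
      · exact mem_insert z I
      · exact mem_insert_of_mem e (hKI ▸ ⟨hzK, hze⟩)
    have hIL : M.IsBasis (insert e I) L := by
      have := basis_trans (L \ {e}) (diff_subset_diff_left hLE) hI
      rwa [insert_diff_singleton, insert_eq_of_mem heL] at this
    have hIX2 := basis_trans X hIX.subset_ground hIX
    have hXL : insert e X ⊆ L := hL.subset_of_isBasis_of_isBasis hIL hIX2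
    intro z hz
    exact ⟨hXL (mem_insert_of_mem e hz), fun h => (hIX.subset_ground hz).2 h⟩
  · have hfmem : f ∈ L \ {e} := ⟨hfL, by simp [hef.symm]⟩
    refine le_antisymm (eRk_le_iff.2 fun I hI hIL => ?_)
      (by simpa using le_eRk hIf (singleton_subset_iff.2 hfmem))
    have hIi := (contract_indep_iff he).1 hI
    have hle : (insert e I).encard ≤ eRk M L :=
      le_eRk hIi.2 (insert_subset heL (hIL.trans diff_subset))
    rw [hr, encard_insert_of_notMem hIi.1] at hle
    have h2 : (2 : ℕ∞) = 1 + 1 := rfl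
    rw [h2] at hle
    exact (WithTop.add_le_add_iff_right WithTop.one_ne_top).1 hle


lemma loop_mem_flat (heE : e ∈ M.E) (he : ¬ M.Indep {e}) (hF : M.IsFlat F) : e ∈ F := by
  have h0 : e ∈ M.closure ∅ := by
    rw [M.empty_indep.mem_closure_iff']
    exact ⟨heE, fun h => absurd (h.subset (by simp)) he⟩
  exact hF.closure ▸ (M.closure_subset_closure (empty_subset F)) h0

lemma rank_contract_loop [M.Finite] (heE : e ∈ M.E) (he : ¬ M.Indep {e}) :
    rank (contract M {e}) = rank M := by
  have hind : ∀ I : Set α, M.Indep I → e ∉ I :=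
    fun I hI heI => he (hI.subset (singleton_subset_iff.2 heI))
  have h : eRank (contract M {e}) = eRank M := by
    apply le_antisymm
    · exact eRk_le_iff.2 fun I hI hIE =>
        le_eRk ((contract_indep_iff_loop heE he).1 hI).2 (hIE.trans diff_subset)
    · exact eRk_le_iff.2 fun I hI hIE =>
        le_eRk ((contract_indep_iff_loop heE he).2 ⟨hind I hI, hI⟩)
          (subset_diff_singleton hIE (hind I hI))
  rw [rank, rank, h]

lemma contract_point_loop (heE : e ∈ M.E) (he : ¬ M.Indep {e}) (hP : M.IsFlat P)
    (hr : eRk M P = 1) :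
    (contract M {e}).IsFlat (P \ {e}) ∧ eRk (contract M {e}) (P \ {e}) = 1 := by
  set M' := contract M {e} with hM'
  have hind : ∀ I : Set α, M.Indep I → e ∉ I :=
    fun I hI heI => he (hI.subset (singleton_subset_iff.2 heI))
  have hPE : P ⊆ M.E := hP.subset_ground
  obtain ⟨f, hf, hPf⟩ := point_rep hP hr
  have hfP : f ∈ P := hf.subset rfl
  have hfe : f ≠ e := fun h => hind {f} hf.indep (h ▸ rfl)
  have basis_trans : ∀ I Y : Set α, Y ⊆ M'.E → M'.IsBasis I Y → M.IsBasis I Y := by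
    intro I Y hYE hIY
    have hIi := ((contract_indep_iff_loop heE he).1 hIY.indep).2
    refine hIi.isBasis_of_maximal_subset hIY.subset (fun K hK hIK hKY => ?_)
      (hYE.trans diff_subset)
    exact (hIY.eq_of_subset_indep ((contract_indep_iff_loop heE he).2
      ⟨hind K hK, hK⟩) hIK hKY).symm.subset
  constructor
  · refine ⟨fun I X hI hIX => ?_, fun x hx => ⟨hPE hx.1, hx.2⟩⟩
    have hIP' := basis_trans I _ (diff_subset_diff_left hPE) hI
    have hIP : M.IsBasis I P := by
      refine hIP'.indep.isBasis_of_maximal_subset (hIP'.subset.trans diff_subset)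
        (fun K hK hIK hKP => ?_) hPE
      exact (hIP'.eq_of_subset_indep hK hIK
        (subset_diff_singleton hKP (hind K hK))).symm.subset
    have hXP : X ⊆ P := hP.subset_of_isBasis_of_isBasis hIP
      (basis_trans I X hIX.subset_ground hIX)
    exact fun z hz => ⟨hXP hz, fun h => (hIX.subset_ground hz).2 h⟩
  · have hIf : M'.Indep {f} := (contract_indep_iff_loop heE he).2
      ⟨by simpa using hfe.symm, hf.indep⟩
    have hfmem : f ∈ P \ {e} := ⟨hfP, by simp [hfe]⟩
    refine le_antisymm (eRk_le_iff.2 fun I hI hIP => ?_)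
      (by simpa using le_eRk hIf (singleton_subset_iff.2 hfmem))
    rw [← hr]
    exact le_eRk ((contract_indep_iff_loop heE he).1 hI).2 (hIP.trans diff_subset)

lemma insert_diff_self_of_mem {s : Set α} (h : e ∈ s) : insert e (s \ {e}) = s := by
  rw [insert_diff_singleton, insert_eq_of_mem h]

lemma eps_le_contract_loop [M.Finite] (heE : e ∈ M.E) (he : ¬ M.Indep {e}) :
    eps M ≤ eps (contract M {e}) := by
  have hfin : {P : Set α | (contract M {e}).IsFlat P ∧ eRk (contract M {e}) P = 1}.Finite := by
    refine Set.Finite.subset (Set.Finite.finite_subsets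
      (M.ground_finite.subset (diff_subset (t := {e})))) ?_
    exact fun P hP => hP.1.subset_ground
  refine Set.ncard_le_ncard_of_injOn (fun P => P \ {e}) ?_ ?_ hfin
  · rintro P ⟨hP, hr⟩
    exact ⟨(contract_point_loop heE he hP hr).1, (contract_point_loop heE he hP hr).2⟩
  · rintro P1 ⟨hP1, -⟩ P2 ⟨hP2, -⟩ heq
    have heq' : P1 \ {e} = P2 \ {e} := heq
    rw [← insert_diff_self_of_mem (loop_mem_flat heE he hP1),
      ← insert_diff_self_of_mem (loop_mem_flat heE he hP2), heq']


lemma overfull_contract_loop {q k : ℕ} [M.Finite] (heE : e ∈ M.E) (he : ¬ M.Indep {e})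
    (hM : Overfull M q k) : Overfull (contract M {e}) q k := by
  unfold Overfull at hM ⊢
  rw [rank_contract_loop heE he]
  exact hM.trans_le (by exact_mod_cast eps_le_contract_loop heE he)

end Aux

/-- If `e` is a `(q,k)`-critical element of a `(q,k)`-overfull matroid `M`, then
either `e` is on a line with at least `q²+2` points, or `e` is on at least
`(q^(2k)-1)/(q²-1) + 1` lines each with at least `q+2` points. -/
theorem statement_6 {α : Type*} (q k : ℕ) (hq : IsPrimePower q)
    (M : Matroid α) [M.Finite] (hM : Overfull M q k) (e : α) (he : e ∈ M.E)
    (hcrit : ¬ Overfull (contract M {e}) q k) :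
    (∃ L : Set α, M.IsFlat L ∧ eRk M L = 2 ∧ e ∈ L ∧ q ^ 2 + 2 ≤ nPoints M L) ∨
    ((q : ℚ) ^ (2 * k) - 1) / ((q : ℚ) ^ 2 - 1) + 1 ≤
      (({L : Set α | M.IsFlat L ∧ eRk M L = 2 ∧ e ∈ L ∧ q + 2 ≤ nPoints M L}).ncard : ℚ) := by
  classical
  have hq2 : 2 ≤ q := by
    obtain ⟨p, n, hp, hn, rfl⟩ := hq
    exact hp.two_le.trans (Nat.le_self_pow hn.ne' p)
  by_contra hcon
  push_neg at hcon
  obtain ⟨h1, h2⟩ := hcon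
  set M' := contract M {e} with hM'def
  by_cases hel : M.Indep {e}
  swap
  · exact hcrit (overfull_contract_loop he hel hM)
  -- `e` is a nonloop
  have hEfin : M.E.Finite := M.ground_finite
  set pts := {P : Set α | M.IsFlat P ∧ eRk M P = 1} with hpts
  have hptsfin : pts.Finite :=
    hEfin.finite_subsets.subset fun P hP => hP.1.subset_ground
  set PF : Finset (Set α) := hptsfin.toFinset with hPF
  set P0 := M.closure {e} with hP0def
  obtain ⟨hP0flat, hP0rk⟩ := closure_singleton_point hel
  have hP0 : P0 ∈ PF := hptsfin.mem_toFinset.2 ⟨hP0flat, hP0rk⟩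
  set lines := {L : Set α | M.IsFlat L ∧ eRk M L = 2 ∧ e ∈ L} with hlines
  have hlinesfin : lines.Finite :=
    hEfin.finite_subsets.subset fun L hL => hL.1.subset_ground
  set LF : Finset (Set α) := hlinesfin.toFinset with hLF
  have hnp : ∀ L : Set α, nPoints M L = (PF.filter (fun P => P ⊆ L)).card := by
    intro L
    rw [nPoints, ← Set.ncard_coe_finset]
    congr 1
    ext P
    simp only [Finset.coe_filter, Set.mem_setOf_eq, hPF, hptsfin.mem_toFinset, hpts]
    tauto
  set g : Set α → Finset (Set α) := fun L => (PF.filter (fun P => P ⊆ L)).erase P0 with hg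
  -- the covering claim
  have hcover : PF ⊆ insert P0 (LF.biUnion g) := by
    intro P hPmem
    obtain ⟨hPflat, hPrk⟩ := hptsfin.mem_toFinset.1 hPmem
    rcases eq_or_ne P P0 with rfl | hne
    · exact Finset.mem_insert_self _ _
    obtain ⟨f, hf, hPf⟩ := point_rep hPflat hPrk
    have heP : e ∉ P := by
      intro heP
      refine hne ?_
      refine (flat_eq_of_subset hP0flat hPflat ?_ (by rw [hP0rk, hPrk]) (by simp [hP0rk])).symm
      have : M.closure {e} ⊆ M.closure P :=
        M.closure_subset_closure (singleton_subset_iff.2 heP)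
      rwa [hPflat.closure] at this
    have hfP : f ∈ P := hf.subset rfl
    have hef : e ≠ f := fun h => heP (h ▸ hfP)
    have hpair : M.Indep {e, f} := by
      rw [show ({e, f} : Set α) = insert e {f} from rfl,
        hf.indep.insert_indep_iff_of_notMem (by simpa using hef)]
      exact ⟨he, by rwa [← hPf]⟩
    obtain ⟨hLflat, hLrk, hLe⟩ := closure_pair_line hpair hef
    have hPL : P ⊆ M.closure {e, f} := by
      rw [hPf]
      exact M.closure_subset_closure (by simp)
    refine Finset.mem_insert_of_mem (Finset.mem_biUnion.2 ⟨M.closure {e, f}, ?_, ?_⟩)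
    · exact hlinesfin.mem_toFinset.2 ⟨hLflat, hLrk, hLe⟩
    · exact Finset.mem_erase.2 ⟨hne, Finset.mem_filter.2 ⟨hPmem, hPL⟩⟩
  have hepsPF : eps M = PF.card := by
    have h0 : eps M = pts.ncard := rfl
    rw [h0, ← hptsfin.coe_toFinset, Set.ncard_coe_finset]
  -- bound each line's contribution
  have hqQ : q ≤ q ^ 2 := Nat.le_self_pow two_ne_zero q
  have hterm : ∀ L ∈ LF, (g L).card ≤ q + (if q + 2 ≤ nPoints M L then q ^ 2 - q else 0) := by
    intro L hL
    obtain ⟨hLflat, hLrk, hLe⟩ := hlinesfin.mem_toFinset.1 hL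
    have hP0L : P0 ∈ PF.filter (fun P => P ⊆ L) := by
      refine Finset.mem_filter.2 ⟨hP0, ?_⟩
      have : M.closure {e} ⊆ M.closure L :=
        M.closure_subset_closure (singleton_subset_iff.2 hLe)
      rwa [hLflat.closure] at this
    have hcard : (g L).card = nPoints M L - 1 := by
      rw [hg, Finset.card_erase_of_mem hP0L, hnp]
    have hub : nPoints M L ≤ q ^ 2 + 1 := by
      have := h1 L hLflat hLrk hLe
      omega
    rcases le_or_gt (q + 2) (nPoints M L) with hlong | hshort
    · rw [if_pos hlong]
      omega
    · rw [if_neg (by omega)]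
      omega
  -- total count
  set Long : Finset (Set α) := LF.filter (fun L => q + 2 ≤ nPoints M L) with hLong
  have hsum : ∑ L ∈ LF, (g L).card ≤ LF.card * q + Long.card * (q ^ 2 - q) := by
    calc ∑ L ∈ LF, (g L).card
        ≤ ∑ L ∈ LF, (q + if q + 2 ≤ nPoints M L then q ^ 2 - q else 0) :=
          Finset.sum_le_sum hterm
      _ = LF.card * q + Long.card * (q ^ 2 - q) := by
          rw [Finset.sum_add_distrib, Finset.sum_const, smul_eq_mul, ← Finset.sum_filter,
            Finset.sum_const, smul_eq_mul]
  have hepsle : eps M ≤ 1 + (LF.card * q + Long.card * (q ^ 2 - q)) := by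
    have hc1 : PF.card ≤ (insert P0 (LF.biUnion g)).card := Finset.card_le_card hcover
    have hc2 : (insert P0 (LF.biUnion g)).card ≤ (LF.biUnion g).card + 1 :=
      Finset.card_insert_le _ _
    have hc3 : (LF.biUnion g).card ≤ ∑ L ∈ LF, (g L).card := Finset.card_biUnion_le
    omega
  -- lines through e inject into points of M/e
  have hM'fin : (M'.E : Set α).Finite := hEfin.subset (by rw [hM'def, contract_ground]; exact diff_subset)
  have hlc : LF.card ≤ eps M' := by
    have h0 : eps M' = {P : Set α | M'.IsFlat P ∧ eRk M' P = 1}.ncard := rfl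
    rw [h0, ← Set.ncard_coe_finset LF, hlinesfin.coe_toFinset]
    refine Set.ncard_le_ncard_of_injOn (fun L => L \ {e}) ?_ ?_ ?_
    · rintro L ⟨hLflat, hLrk, hLe⟩
      exact ⟨(contract_point_of_line hel hLflat hLrk hLe).1,
        (contract_point_of_line hel hLflat hLrk hLe).2⟩
    · rintro L1 ⟨-, -, hL1e⟩ L2 ⟨-, -, hL2e⟩ heq
      have heq' : L1 \ {e} = L2 \ {e} := heq
      rw [← insert_diff_self_of_mem hL1e, ← insert_diff_self_of_mem hL2e, heq']
    · exact hM'fin.finite_subsets.subset fun P hP => hP.1.subset_ground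
  -- arithmetic endgame
  have hq2Q : (2 : ℚ) ≤ (q : ℚ) := by exact_mod_cast hq2
  have hq1 : (q : ℚ) - 1 ≠ 0 := sub_ne_zero.2 (by linarith)
  have hq21 : (q : ℚ) ^ 2 - 1 ≠ 0 := sub_ne_zero.2 (by nlinarith)
  set Dn : ℕ := ∑ i ∈ Finset.range k, q ^ (2 * i) with hDn
  have hD : (Dn : ℚ) = ((q : ℚ) ^ (2 * k) - 1) / ((q : ℚ) ^ 2 - 1) := by
    rw [hDn]
    push_cast
    have : ∀ i, ((q : ℚ)) ^ (2 * i) = ((q : ℚ) ^ 2) ^ i := fun i => pow_mul _ 2 i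
    rw [Finset.sum_congr rfl fun i _ => this i, geom_sum_eq (by nlinarith) k, ← this k]
  have hlongset : {L : Set α | M.IsFlat L ∧ eRk M L = 2 ∧ e ∈ L ∧ q + 2 ≤ nPoints M L}.ncard
      = Long.card := by
    rw [← Set.ncard_coe_finset Long]
    congr 1
    ext L
    simp only [hLong, Finset.coe_filter, Set.mem_setOf_eq, hLF, hlinesfin.mem_toFinset, hlines]
    tauto
  have hLongDn : Long.card ≤ Dn := by
    rw [hlongset, ← hD] at h2
    have : (Long.card : ℚ) < (Dn : ℚ) + 1 := h2
    exact_mod_cast Nat.lt_succ_iff.1 (by exact_mod_cast this)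
  -- from criticality
  have hr : rank M = rank M' + 1 := rank_contract_add_one hel
  rw [Overfull] at hcrit
  push_neg at hcrit
  rw [Overfull, hr] at hM
  set r' := rank M' with hr'
  set Dq : ℚ := ((q : ℚ) ^ (2 * k) - 1) / ((q : ℚ) ^ 2 - 1) with hDq
  have hchain : (eps M : ℚ) ≤ 1 + (eps M' : ℚ) * q + (Dn : ℚ) * ((q : ℚ) ^ 2 - (q : ℚ)) := by
    have hcast : (eps M : ℚ) ≤ 1 + (LF.card : ℚ) * q + (Long.card : ℚ) * ((q : ℚ) ^ 2 - q) := by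
      have := hepsle
      have hc : ((1 + (LF.card * q + Long.card * (q ^ 2 - q)) : ℕ) : ℚ)
          = 1 + (LF.card : ℚ) * q + (Long.card : ℚ) * ((q : ℚ) ^ 2 - q) := by
        push_cast [Nat.cast_sub hqQ]
        ring
      calc (eps M : ℚ) ≤ ((1 + (LF.card * q + Long.card * (q ^ 2 - q)) : ℕ) : ℚ) := by
            exact_mod_cast this
        _ = _ := hc
    refine hcast.trans ?_
    have h1' : (LF.card : ℚ) * q ≤ (eps M' : ℚ) * q :=
      mul_le_mul_of_nonneg_right (by exact_mod_cast hlc) (by positivity)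
    have h2' : (Long.card : ℚ) * ((q : ℚ) ^ 2 - q) ≤ (Dn : ℚ) * ((q : ℚ) ^ 2 - q) :=
      mul_le_mul_of_nonneg_right (by exact_mod_cast hLongDn) (by nlinarith)
    linarith
  have hcrit' : (eps M' : ℚ) ≤ ((q : ℚ) ^ (r' + k) - 1) / ((q : ℚ) - 1)
      - (q : ℚ) * ((q : ℚ) ^ (2 * k) - 1) / ((q : ℚ) ^ 2 - 1) := hcrit
  have hkey : (1 : ℚ) + (((q : ℚ) ^ (r' + k) - 1) / ((q : ℚ) - 1)
        - (q : ℚ) * ((q : ℚ) ^ (2 * k) - 1) / ((q : ℚ) ^ 2 - 1)) * q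
        + ((q : ℚ) ^ (2 * k) - 1) / ((q : ℚ) ^ 2 - 1) * ((q : ℚ) ^ 2 - (q : ℚ))
      = ((q : ℚ) ^ (r' + 1 + k) - 1) / ((q : ℚ) - 1)
        - (q : ℚ) * ((q : ℚ) ^ (2 * k) - 1) / ((q : ℚ) ^ 2 - 1) := by
    field_simp
    ring
  rw [hD] at hchain
  have hq0 : (0 : ℚ) ≤ (q : ℚ) := by positivity
  have hmul : (eps M' : ℚ) * q ≤ (((q : ℚ) ^ (r' + k) - 1) / ((q : ℚ) - 1)
      - (q : ℚ) * ((q : ℚ) ^ (2 * k) - 1) / ((q : ℚ) ^ 2 - 1)) * q :=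
    mul_le_mul_of_nonneg_right hcrit' hq0
  linarith [hM]

end GrowthRate
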